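/- There exist subsets O and C of the unit circle S¹ = {z ∈ ℂ : ‖z‖ = 1} (with the subspace topology) such that O is open in S¹, C is closed in S¹, O ∪ C = S¹, O is contractible, the inclusion map C ∩ O ↪ C is a homotopy equivalence, and yet S¹ is not contractible. Hence the inference scheme 'if a space X is covered by a contractible open set O and a closed set C such that the inclusion C ∩ O ↪ C is a homotopy equivalence, then X is contractible' is invalid. -/

import Mathlib

open Complex

lemma normsq_one {w : ℂ} (h1 : ‖w‖ = 1) : w.re^2 + w.im^2 = 1 := by
  have h : Complex.normSq w = 1 := by
    have := Complex.sq_norm w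
    rw [h1] at this
    simpa using this.symm
  rw [Complex.normSq_apply] at h
  nlinarith

lemma mem_slit {w : ℂ} (h1 : ‖w‖ = 1) (h2 : w ≠ -1) : w ∈ Complex.slitPlane := by
  rw [Complex.mem_slitPlane_iff]
  by_contra hc
  push_neg at hc
  apply h2
  have h3 := normsq_one h1
  have hre : w.re = -1 := by nlinarith [hc.1, hc.2]
  apply Complex.ext <;> simp [hre, hc.2]

lemma exp_eq_neg_one {x : ℝ} (h : Complex.exp (x * I) = -1) : ∃ m : ℤ, x = (2*m+1) * Real.pi := by
  rw [← Complex.exp_pi_mul_I, Complex.exp_eq_exp_iff_exists_int] at h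
  obtain ⟨m, hm⟩ := h
  refine ⟨m, ?_⟩
  have : (x : ℂ) = ((2*m+1) * Real.pi : ℝ) := by
    have hI : (I : ℂ) ≠ 0 := Complex.I_ne_zero
    field_simp at hm ⊢
    push_cast at hm ⊢
    have : (x : ℂ) * I = ((2*m+1) * Real.pi) * I := by rw [hm]; ring
    exact mul_right_cancel₀ hI this
  exact_mod_cast this

lemma exp_ne_neg_one {x : ℝ} (hx : |x| < Real.pi) : Complex.exp (x * I) ≠ -1 := by
  intro h
  obtain ⟨m, hm⟩ := exp_eq_neg_one h
  rw [hm, abs_mul, abs_of_pos Real.pi_pos] at hx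
  have h1 : (1:ℝ) ≤ |(2*(m:ℝ)+1)| := by
    have : (2*m+1 : ℤ) ≠ 0 := by omega
    have := Int.one_le_abs this
    calc (1:ℝ) ≤ |(2*m+1 : ℤ)| := by exact_mod_cast this
      _ = |(2*(m:ℝ)+1)| := by push_cast; ring_nf
  nlinarith [Real.pi_pos]

lemma prod_div_telescope (f : ℕ → ℂ) (hf : ∀ k, f k ≠ 0) (n : ℕ) :
    ∏ k ∈ Finset.range n, f (k+1) / f k = f n / f 0 := by
  induction n with
  | zero => simp [div_self (hf 0)]
  | succ n ih =>
    rw [Finset.prod_range_succ, ih]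
    field_simp
    rw [mul_div_mul_left _ _ (hf n)]

example (a : ℕ → ℝ) (n : ℕ) :
    Complex.exp ((∑ k ∈ Finset.range n, a k : ℝ) * I) =
      ∏ k ∈ Finset.range n, Complex.exp (a k * I) := by
  rw [← Complex.exp_sum]
  congr 1
  push_cast
  rw [Finset.sum_mul]
noncomputable def arcPt (x : ℝ) : ℂ := (x:ℂ) + Real.sqrt (1 - x^2) * Complex.I

lemma arcPt_re (x : ℝ) : (arcPt x).re = x := by simp [arcPt]
lemma arcPt_im (x : ℝ) : (arcPt x).im = Real.sqrt (1 - x^2) := by simp [arcPt]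

lemma arcPt_norm {x : ℝ} (h1 : -1 ≤ x) (h2 : x ≤ 1) : ‖arcPt x‖ = 1 := by
  rw [arcPt, Complex.norm_add_mul_I]
  rw [Real.sq_sqrt (by nlinarith)]
  norm_num

lemma arcPt_cont : Continuous arcPt := by
  apply Continuous.add
  · exact Complex.continuous_ofReal
  · apply Continuous.mul _ continuous_const
    exact Complex.continuous_ofReal.comp
      (Real.continuous_sqrt.comp (continuous_const.sub (continuous_pow 2)))

lemma arcPt_of {z : ℂ} (hz : ‖z‖ = 1) (him : 0 ≤ z.im) : arcPt z.re = z := by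
  have h := normsq_one hz
  rw [arcPt, show 1 - z.re^2 = z.im^2 by nlinarith, Real.sqrt_sq him, Complex.re_add_im]

lemma arcPt_neg_one : arcPt (-1) = -1 := by
  rw [arcPt]
  norm_num

lemma re_mem {z : ℂ} (hz : ‖z‖ = 1) : -1 ≤ z.re ∧ z.re ≤ 1 := by
  have h := normsq_one hz
  constructor <;> nlinarith

-- the interpolation parameter
lemma xt_mem {t r : ℝ} (ht0 : 0 ≤ t) (ht1 : t ≤ 1) (hr0 : -1 ≤ r) (hr1 : r ≤ 1) :
    -1 ≤ (1-t)*r - t ∧ (1-t)*r - t ≤ 1 - 2*t := by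
  constructor <;> nlinarith

example : True := trivial

lemma eq_one_of_re_eq_one {z : ℂ} (hz : ‖z‖ = 1) (hre : z.re = 1) : z = 1 := by
  have h := normsq_one hz
  have him : z.im = 0 := by nlinarith
  apply Complex.ext <;> simp [hre, him]

namespace BissCounter

abbrev S1 := {z : ℂ // ‖z‖ = 1}

def Oset : Set S1 := Subtype.val ⁻¹' {(1:ℂ)}ᶜ
def Cset : Set S1 := Subtype.val ⁻¹' {w : ℂ | 0 ≤ w.im}

lemma mem_Oset {z : S1} : z ∈ Oset ↔ (z:ℂ) ≠ 1 := Iff.rfl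
lemma mem_Cset {z : S1} : z ∈ Cset ↔ 0 ≤ (z:ℂ).im := Iff.rfl

noncomputable def pt : S1 := ⟨-1, by norm_num⟩

lemma pt_mem_C : pt ∈ Cset := by rw [mem_Cset]; simp [pt]
lemma pt_mem_O : pt ∈ Oset := by rw [mem_Oset]; simp [pt]; intro h; norm_num at h
lemma pt_mem_CO : pt ∈ Cset ∩ Oset := ⟨pt_mem_C, pt_mem_O⟩

-- the interpolation as a real-valued function
noncomputable def xt (p : unitInterval × S1) : ℝ := (1 - (p.1:ℝ)) * ((p.2:ℂ)).re - p.1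

lemma xt_cont : Continuous xt := by
  apply Continuous.sub
  · exact ((continuous_const.sub (continuous_subtype_val.comp continuous_fst)).mul
      (Complex.continuous_re.comp (continuous_subtype_val.comp continuous_snd)))
  · exact continuous_subtype_val.comp continuous_fst

lemma xt_bounds (p : unitInterval × S1) : -1 ≤ xt p ∧ xt p ≤ 1 - 2*(p.1:ℝ) := by
  obtain ⟨hr0, hr1⟩ := re_mem p.2.2
  exact xt_mem p.1.2.1 p.1.2.2 hr0 hr1

lemma arcPt_xt_norm (p : unitInterval × S1) : ‖arcPt (xt p)‖ = 1 := by
  obtain ⟨h1, h2⟩ := xt_bounds p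
  have := p.1.2.1
  exact arcPt_norm h1 (by linarith)

lemma arcPt_xt_imC (p : unitInterval × S1) : 0 ≤ (arcPt (xt p)).im := by
  rw [arcPt_im]; exact Real.sqrt_nonneg _

lemma arcPt_xt_zero (z : S1) (hz : 0 ≤ (z:ℂ).im) : arcPt (xt (0, z)) = (z:ℂ) := by
  have : xt (0, z) = (z:ℂ).re := by simp [xt]
  rw [this, arcPt_of z.2 hz]

lemma arcPt_xt_one (z : S1) : arcPt (xt (1, z)) = -1 := by
  have : xt (1, z) = -1 := by simp [xt]
  rw [this, arcPt_neg_one]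

lemma arcPt_xt_ne_one (p : unitInterval × S1) (hO : p.2 ∈ Oset) : arcPt (xt p) ≠ 1 := by
  intro h
  have hre : xt p = 1 := by
    have := congrArg Complex.re h
    rwa [arcPt_re, Complex.one_re] at this
  obtain ⟨h1, h2⟩ := xt_bounds p
  have ht0 : (p.1:ℝ) = 0 := by
    have := p.1.2.1
    linarith
  have hrez : ((p.2:ℂ)).re = 1 := by
    rw [xt, ht0] at hre
    linarith
  exact hO (eq_one_of_re_eq_one p.2.2 hrez)

/-- contraction of C to pt -/
noncomputable def contrC : ContinuousMap.Homotopy (ContinuousMap.id ↥Cset)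
    (ContinuousMap.const ↥Cset ⟨pt, pt_mem_C⟩) where
  toFun := fun p => ⟨⟨arcPt (xt (p.1, p.2.1)), arcPt_xt_norm _⟩, arcPt_xt_imC (p.1, p.2.1)⟩
  continuous_toFun := by
    apply Continuous.subtype_mk
    apply Continuous.subtype_mk
    exact arcPt_cont.comp (xt_cont.comp
      (continuous_fst.prodMk (continuous_subtype_val.comp continuous_snd)))
  map_zero_left := by
    intro x
    apply Subtype.ext; apply Subtype.ext
    exact arcPt_xt_zero x.1 x.2
  map_one_left := by
    intro x
    apply Subtype.ext; apply Subtype.ext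
    exact arcPt_xt_one x.1

/-- contraction of C ∩ O to pt -/
noncomputable def contrCO : ContinuousMap.Homotopy (ContinuousMap.id ↥(Cset ∩ Oset))
    (ContinuousMap.const ↥(Cset ∩ Oset) ⟨pt, pt_mem_CO⟩) where
  toFun := fun p => ⟨⟨arcPt (xt (p.1, p.2.1)), arcPt_xt_norm _⟩,
    arcPt_xt_imC (p.1, p.2.1), arcPt_xt_ne_one (p.1, p.2.1) p.2.2.2⟩
  continuous_toFun := by
    apply Continuous.subtype_mk
    apply Continuous.subtype_mk
    exact arcPt_cont.comp (xt_cont.comp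
      (continuous_fst.prodMk (continuous_subtype_val.comp continuous_snd)))
  map_zero_left := by
    intro x
    apply Subtype.ext; apply Subtype.ext
    exact arcPt_xt_zero x.1 x.2.1
  map_one_left := by
    intro x
    apply Subtype.ext; apply Subtype.ext
    exact arcPt_xt_one x.1

end BissCounter

namespace BissCounter

lemma neg_mem_slit {z : S1} (hz : z ∈ Oset) : -(z:ℂ) ∈ Complex.slitPlane := by
  apply mem_slit (by rw [norm_neg]; exact z.2)
  intro h
  exact (mem_Oset.mp hz) (neg_inj.mp h)

lemma abs_argO_lt {z : S1} (hz : z ∈ Oset) : |Complex.arg (-(z:ℂ))| < Real.pi := by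
  rw [abs_lt]
  constructor
  · exact Complex.neg_pi_lt_arg _
  · rcases lt_or_eq_of_le (Complex.arg_le_pi (-(z:ℂ))) with h | h
    · exact h
    · exfalso
      rw [Complex.arg_eq_pi_iff] at h
      have hre : ((z:ℂ)).re = 1 := by
        have h1 := h.1
        have h2 := h.2
        simp only [Complex.neg_re, Complex.neg_im, neg_lt_zero, neg_eq_zero] at h1 h2
        have := normsq_one z.2
        rw [show ((z:ℂ)).im = 0 from h2] at this
        nlinarith
      exact hz (eq_one_of_re_eq_one z.2 hre)

noncomputable def oMap (p : unitInterval × ↥Oset) : ℂ :=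
  -Complex.exp (((1 - (p.1:ℝ)) * Complex.arg (-(((p.2:S1)):ℂ)) : ℝ) * Complex.I)

lemma oMap_norm (p : unitInterval × ↥Oset) : ‖oMap p‖ = 1 := by
  rw [oMap, norm_neg, Complex.norm_exp_ofReal_mul_I]

lemma oMap_ne_one (p : unitInterval × ↥Oset) : oMap p ≠ 1 := by
  intro h
  have h2 : Complex.exp (((1 - (p.1:ℝ)) * Complex.arg (-(((p.2:S1)):ℂ)) : ℝ) * Complex.I) = -1 := by
    rw [oMap] at h
    linear_combination -h
  apply exp_ne_neg_one ?_ h2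
  have h1 : |1 - (p.1:ℝ)| ≤ 1 := by
    rw [abs_le]
    have := p.1.2.1; have := p.1.2.2
    constructor <;> linarith
  calc |(1 - (p.1:ℝ)) * Complex.arg (-(((p.2:S1)):ℂ))|
      = |1 - (p.1:ℝ)| * |Complex.arg (-(((p.2:S1)):ℂ))| := abs_mul _ _
    _ ≤ 1 * |Complex.arg (-(((p.2:S1)):ℂ))| := by
        apply mul_le_mul_of_nonneg_right h1 (abs_nonneg _)
    _ < Real.pi := by rw [one_mul]; exact abs_argO_lt p.2.2

lemma oMap_cont : Continuous oMap := by
  apply Continuous.neg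
  apply Complex.continuous_exp.comp
  apply Continuous.mul _ continuous_const
  apply Complex.continuous_ofReal.comp
  apply Continuous.mul
  · exact continuous_const.sub (continuous_subtype_val.comp continuous_fst)
  · have harg : Continuous fun z : ↥Oset => Complex.arg (-((z:S1):ℂ)) := by
      rw [continuous_iff_continuousAt]
      intro z
      exact ContinuousAt.comp (g := Complex.arg) (f := fun z : ↥Oset => -((z:S1):ℂ))
        (Complex.continuousAt_arg (neg_mem_slit z.2))
        ((continuous_subtype_val.comp continuous_subtype_val).neg.continuousAt)
    exact harg.comp continuous_snd

lemma oMap_zero (z : ↥Oset) : oMap (0, z) = ((z:S1):ℂ) := by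
  rw [oMap]
  simp only [Set.Icc.coe_zero, sub_zero, one_mul]
  have habs : ‖(-((z:S1):ℂ))‖ = 1 := by
    rw [norm_neg]; exact (z:S1).2
  have := Complex.norm_mul_exp_arg_mul_I (-((z:S1):ℂ))
  rw [habs] at this
  simp only [ofReal_one, one_mul] at this
  rw [this]
  ring

lemma oMap_one (z : ↥Oset) : oMap (1, z) = -1 := by
  rw [oMap]
  simp

noncomputable def contrO : ContinuousMap.Homotopy (ContinuousMap.id ↥Oset)
    (ContinuousMap.const ↥Oset ⟨pt, pt_mem_O⟩) where
  toFun := fun p => ⟨⟨oMap p, oMap_norm p⟩, oMap_ne_one p⟩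
  continuous_toFun := (oMap_cont.subtype_mk _).subtype_mk _
  map_zero_left := fun x => Subtype.ext (Subtype.ext (oMap_zero x))
  map_one_left := fun x => Subtype.ext (Subtype.ext (oMap_one x))

lemma contractibleO : ContractibleSpace ↥Oset :=
  (contractible_iff_id_nullhomotopic _).mpr ⟨⟨pt, pt_mem_O⟩, ⟨contrO⟩⟩

noncomputable def incl : C(↥(Cset ∩ Oset), ↥Cset) :=
  ⟨fun x => ⟨x.1, x.2.1⟩, (continuous_subtype_val).subtype_mk _⟩

noncomputable def hEquiv : ContinuousMap.HomotopyEquiv ↥(Cset ∩ Oset) ↥Cset where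
  toFun := incl
  invFun := ContinuousMap.const _ ⟨pt, pt_mem_CO⟩
  left_inv := ContinuousMap.Homotopic.symm ⟨contrCO⟩
  right_inv := ContinuousMap.Homotopic.symm ⟨contrC⟩

end BissCounter

lemma compactS : CompactSpace {z : ℂ // ‖z‖ = 1} := by
  have hc : IsClosed {z : ℂ | ‖z‖ = 1} := isClosed_eq continuous_norm continuous_const
  have hb : Bornology.IsBounded {z : ℂ | ‖z‖ = 1} := by
    apply Bornology.IsBounded.subset (Metric.isBounded_closedBall (x := (0:ℂ)) (r := 1))
    intro z hz
    simp [Metric.mem_closedBall, Complex.dist_eq]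
    simp at hz
    simp [hz]
  have := isCompact_iff_compactSpace.mp (Metric.isCompact_of_isClosed_isBounded hc hb)
  exact this

lemma connS : PreconnectedSpace {z : ℂ // ‖z‖ = 1} := by
  have hsur : Function.Surjective (fun x : ℝ => (⟨Complex.exp (x * I), by
      exact Complex.norm_exp_ofReal_mul_I x⟩ : {z : ℂ // ‖z‖ = 1})) := by
    intro z
    refine ⟨Complex.arg z.1, ?_⟩
    apply Subtype.ext
    have := Complex.norm_mul_exp_arg_mul_I z.1
    rw [show ‖z.1‖ = 1 by exact z.2] at this
    simpa using this
  have : ConnectedSpace {z : ℂ // ‖z‖ = 1} := hsur.connectedSpace (by continuity)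
  exact this.toPreconnectedSpace

lemma odd_pi_ne_zero (m : ℤ) : (2*(m:ℝ)+1) * Real.pi ≠ 0 := by
  intro h
  rcases mul_eq_zero.mp h with h1 | h2
  · have : (2*m+1 : ℤ) = 0 := by exact_mod_cast h1
    omega
  · exact Real.pi_ne_zero h2

lemma not_contractible_circle : ¬ ContractibleSpace {z : ℂ // ‖z‖ = 1} := by
  intro hctr
  set S := {z : ℂ // ‖z‖ = 1}
  have : CompactSpace S := compactS
  have : PreconnectedSpace S := connS
  obtain ⟨c, ⟨H⟩⟩ := (contractible_iff_id_nullhomotopic S).mp hctr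
  set h : unitInterval → S → ℂ := fun t z => (H (t, z) : ℂ) with hh
  have hcont : Continuous (fun p : unitInterval × S => h p.1 p.2) :=
    continuous_subtype_val.comp H.continuous
  have hcontt : ∀ t, Continuous fun z => h t z := fun t =>
    hcont.comp (continuous_const.prodMk continuous_id)
  have hnorm : ∀ t z, ‖h t z‖ = 1 := fun t z => (H (t, z)).2
  have hne : ∀ t z, h t z ≠ 0 := by
    intro t z h0
    have := hnorm t z
    rw [h0] at this
    simp at this
  -- uniform "no antipodal jump" bound
  obtain ⟨δ, hδ0, hδ⟩ : ∃ δ > 0, ∀ (t s : unitInterval) (z : S),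
      |(t:ℝ) - s| < δ → h t z ≠ -h s z := by
    set A : Set ((unitInterval × unitInterval) × S) :=
      {p | h p.1.1 p.2 = - h p.1.2 p.2} with hA
    have hAclosed : IsClosed A := by
      apply isClosed_eq
      · exact hcont.comp ((continuous_fst.comp continuous_fst).prodMk continuous_snd)
      · exact (hcont.comp ((continuous_snd.comp continuous_fst).prodMk continuous_snd)).neg
    by_cases hAne : A.Nonempty
    · have hAcpt : IsCompact A := hAclosed.isCompact
      obtain ⟨a, haA, hamin'⟩ := hAcpt.exists_isMinOn hAne
        (Continuous.continuousOn (Continuous.abs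
          ((continuous_subtype_val.comp (continuous_fst.comp continuous_fst)).sub
           (continuous_subtype_val.comp (continuous_snd.comp continuous_fst)))))
      have hamin := isMinOn_iff.mp hamin'
      refine ⟨|(a.1.1:ℝ) - a.1.2|, ?_, ?_⟩
      · rcases lt_or_eq_of_le (abs_nonneg ((a.1.1:ℝ) - a.1.2)) with h' | h'
        · exact h'
        · exfalso
          have hts : a.1.1 = a.1.2 := by
            apply Subtype.ext
            have := abs_eq_zero.mp h'.symm
            linarith [sub_eq_zero.mp this]
          have := haA
          rw [hA, Set.mem_setOf_eq, hts] at this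
          have h2 : (2:ℂ) * h a.1.2 a.2 = 0 := by rw [two_mul]; linear_combination this
          rcases mul_eq_zero.mp h2 with h3 | h3
          · norm_num at h3
          · exact hne _ _ h3
      · intro t s z hlt heq
        have : ((t, s), z) ∈ A := heq
        exact absurd hlt (not_lt.mpr (hamin _ this))
    · refine ⟨1, one_pos, fun t s z _ heq => hAne ⟨((t, s), z), heq⟩⟩
  -- subdivision
  obtain ⟨n, hngt⟩ := exists_nat_gt (1/δ)
  have hnpos : 0 < (n:ℝ) := lt_trans (by positivity) hngt
  have hstep : 1/(n:ℝ) < δ := by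
    rw [div_lt_iff₀ hnpos]
    have := (div_lt_iff₀ hδ0).mp hngt
    linarith
  set tk : ℕ → unitInterval := fun k => Set.projIcc 0 1 zero_le_one ((k:ℝ)/n) with htkdef
  have htk : ∀ k ≤ n, (tk k : ℝ) = k / n := by
    intro k hk
    have hmem : (k:ℝ)/n ∈ Set.Icc (0:ℝ) 1 :=
      ⟨by positivity, by rw [div_le_one hnpos]; exact_mod_cast hk⟩
    simp only [htkdef]
    rw [Set.projIcc_of_mem zero_le_one hmem]
  have htk0 : tk 0 = 0 := by
    apply Subtype.ext
    rw [htk 0 (Nat.zero_le n)]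
    norm_num
  have htkn : tk n = 1 := by
    apply Subtype.ext
    rw [htk n le_rfl, div_self (ne_of_gt hnpos)]
    norm_num
  -- ratio facts
  have hratio_ne : ∀ k < n, ∀ z : S, h (tk (k+1)) z ≠ - h (tk k) z := by
    intro k hk z
    apply hδ
    rw [htk (k+1) hk, htk k (le_of_lt hk)]
    have : ((k:ℝ)+1) / n - k / n = 1 / n := by field_simp; ring
    rw [show (((k+1):ℕ):ℝ) = (k:ℝ)+1 by push_cast; ring, this,
      abs_of_pos (by positivity)]
    exact hstep
  have hrnorm : ∀ k (z : S), ‖h (tk (k+1)) z / h (tk k) z‖ = 1 := by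
    intro k z
    rw [norm_div, hnorm, hnorm, div_one]
  have hrslit : ∀ k < n, ∀ z : S, h (tk (k+1)) z / h (tk k) z ∈ Complex.slitPlane := by
    intro k hk z
    apply mem_slit (hrnorm k z)
    intro heq
    apply hratio_ne k hk z
    rw [div_eq_iff (hne _ z)] at heq
    rw [heq]; ring
  set θ : S → ℝ := fun z => ∑ k ∈ Finset.range n,
    Complex.arg (h (tk (k+1)) z / h (tk k) z) with hθdef
  have hθcont : Continuous θ := by
    apply continuous_finset_sum
    intro k hk
    rw [Finset.mem_range] at hk
    have hrc : Continuous fun z : S => h (tk (k+1)) z / h (tk k) z :=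
      (hcontt _).div (hcontt _) fun z => hne _ z
    rw [continuous_iff_continuousAt]
    exact fun z => ContinuousAt.comp (g := Complex.arg)
      (f := fun z : S => h (tk (k+1)) z / h (tk k) z)
      (Complex.continuousAt_arg (hrslit k hk z)) hrc.continuousAt
  have hexpθ : ∀ z : S, Complex.exp (θ z * I) = (c:ℂ) / (z:ℂ) := by
    intro z
    have e1 : Complex.exp (θ z * I) = ∏ k ∈ Finset.range n,
        Complex.exp (Complex.arg (h (tk (k+1)) z / h (tk k) z) * I) := by
      rw [← Complex.exp_sum]
      congr 1
      rw [hθdef]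
      push_cast
      rw [Finset.sum_mul]
    rw [e1]
    have e2 : ∀ k ∈ Finset.range n,
        Complex.exp (Complex.arg (h (tk (k+1)) z / h (tk k) z) * I)
          = h (tk (k+1)) z / h (tk k) z := by
      intro k hk
      have habs : ‖(h (tk (k+1)) z / h (tk k) z)‖ = 1 := by
        exact hrnorm k z
      have := Complex.norm_mul_exp_arg_mul_I (h (tk (k+1)) z / h (tk k) z)
      rw [habs] at this
      simpa using this
    rw [Finset.prod_congr rfl e2,
      prod_div_telescope (fun k => h (tk k) z) (fun k => hne _ z) n,
      htkn, htk0]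
    have hn1 : h 1 z = (c:ℂ) := congrArg Subtype.val (H.apply_one z)
    have hn0 : h 0 z = (z:ℂ) := congrArg Subtype.val (H.apply_zero z)
    rw [hn1, hn0]
  -- continuous argument function
  set φ : S → ℝ := fun z => Complex.arg (c:ℂ) - θ z with hφdef
  have hφcont : Continuous φ := continuous_const.sub hθcont
  have hcne : (c:ℂ) ≠ 0 := by
    intro h0; have := c.2; rw [h0] at this; simp at this
  have hzne : ∀ z : S, (z:ℂ) ≠ 0 := by
    intro z h0; have := z.2; rw [h0] at this; simp at this
  have hφ : ∀ z : S, Complex.exp (φ z * I) = (z:ℂ) := by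
    intro z
    have : ((φ z : ℝ) : ℂ) * I = Complex.arg (c:ℂ) * I - θ z * I := by
      rw [hφdef]; push_cast; ring
    rw [this, Complex.exp_sub, hexpθ]
    have habs : ‖(c:ℂ)‖ = 1 := by exact c.2
    have := Complex.norm_mul_exp_arg_mul_I (c:ℂ)
    rw [habs] at this
    simp only [ofReal_one, one_mul] at this
    rw [this]
    field_simp
  -- antipodal map and parity contradiction
  set neg : S → S := fun z => ⟨-(z:ℂ), by rw [norm_neg]; exact z.2⟩ with hnegdef
  have hnegcont : Continuous neg := (continuous_neg.comp continuous_subtype_val).subtype_mk _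
  set ψ : S → ℝ := fun z => φ (neg z) - φ z with hψdef
  have hψcont : Continuous ψ := (hφcont.comp hnegcont).sub hφcont
  have hψval : ∀ z : S, ∃ m : ℤ, ψ z = (2*(m:ℝ)+1) * Real.pi := by
    intro z
    apply exp_eq_neg_one
    have : ((ψ z : ℝ) : ℂ) * I = φ (neg z) * I - φ z * I := by
      rw [hψdef]; push_cast; ring
    rw [this, Complex.exp_sub, hφ, hφ]
    show (-(z:ℂ)) / (z:ℂ) = -1
    rw [neg_div, div_self (hzne z)]
  set iS : S := ⟨Complex.I, by simp⟩ with hiSdef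
  have hnegneg : neg (neg iS) = iS := Subtype.ext (neg_neg _)
  have hψneg : ψ (neg iS) = - ψ iS := by
    rw [hψdef]; simp only [hnegneg]; ring
  have hd : ψ iS ≠ 0 := by
    obtain ⟨m, hm⟩ := hψval iS
    rw [hm]
    exact odd_pi_ne_zero m
  have hzero : ∃ w : S, ψ w = 0 := by
    rcases le_total 0 (ψ iS) with hle | hle
    · have h0 : (0:ℝ) ∈ Set.Icc (ψ (neg iS)) (ψ iS) := by
        rw [hψneg]; constructor <;> linarith
      obtain ⟨w, hw⟩ := intermediate_value_univ (neg iS) iS hψcont h0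
      exact ⟨w, hw⟩
    · have h0 : (0:ℝ) ∈ Set.Icc (ψ iS) (ψ (neg iS)) := by
        rw [hψneg]; constructor <;> linarith
      obtain ⟨w, hw⟩ := intermediate_value_univ iS (neg iS) hψcont h0
      exact ⟨w, hw⟩
  obtain ⟨w, hw⟩ := hzero
  obtain ⟨m, hm⟩ := hψval w
  rw [hw] at hm
  exact odd_pi_ne_zero m hm.symm


/-- There is a cover of the unit circle S¹ = {z : ℂ | ‖z‖ = 1} by an open set `O`
and a closed set `C` such that `O` is contractible and the inclusion
`C ∩ O ↪ C` is a homotopy equivalence, yet `S¹` is not contractible.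
This refutes the inference scheme used in Biss's Propositions 4.5 / 7.3. -/
theorem circle_counterexample_to_biss_covering_argument :
    ∃ O C : Set {z : ℂ // ‖z‖ = 1},
      IsOpen O ∧ IsClosed C ∧ O ∪ C = Set.univ ∧
      ContractibleSpace ↥O ∧
      (∃ e : ContinuousMap.HomotopyEquiv ↥(C ∩ O) ↥C,
        ∀ x : ↥(C ∩ O),
          (e.toFun x : {z : ℂ // ‖z‖ = 1}) = ((x : ↥(C ∩ O)) : {z : ℂ // ‖z‖ = 1})) ∧
      ¬ ContractibleSpace {z : ℂ // ‖z‖ = 1} := by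
  refine ⟨BissCounter.Oset, BissCounter.Cset, ?_, ?_, ?_, BissCounter.contractibleO,
    ⟨BissCounter.hEquiv, fun x => rfl⟩, not_contractible_circle⟩
  · exact isOpen_compl_singleton.preimage continuous_subtype_val
  · exact (isClosed_le continuous_const Complex.continuous_im).preimage continuous_subtype_val
  · ext z
    simp only [Set.mem_union, Set.mem_univ, iff_true]
    by_cases h : (z : ℂ) = 1
    · right
      exact BissCounter.mem_Cset.mpr (by rw [h]; norm_num)
    · left
      exact BissCounter.mem_Oset.mpr h
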